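/- Let λ ∈ ℝ^{2N} be any vector (the diagonal of the full density matrix on n computation qubits and one reset qubit). Define the reset step ζ ∈ ℝ^{2N} by ζ_{2k} = (λ_{2k} + λ_{2k+1})·e^{ε}/z and ζ_{2k+1} = (λ_{2k} + λ_{2k+1})·e^{−ε}/z for k = 0,…,N−1, and the two-sort step λ' by λ'_j = ζ_{σ(j)} where σ fixes 0 and 2N−1 and swaps 2k−1 ↔ 2k for k = 1,…,N−1. Then the induced map on the computation-qubit diagonal p, defined by p_k = λ_{2k} + λ_{2k+1} and p'_k = λ'_{2k} + λ'_{2k+1}, satisfies p' = T p. -/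

import Mathlib

open Real Matrix Finset

/-- The TSAC transition matrix `T` on the diagonal of the computation-qubit density
matrix: `N = 2^n`, `z = e^ε + e^{-ε}`, `T 0 0 = T 0 1 = e^ε/z`,
`T (N-1) (N-2) = T (N-1) (N-1) = e^{-ε}/z`, and for `0 < i < N-1`,
`T i (i-1) = e^{-ε}/z`, `T i (i+1) = e^ε/z`; all other entries vanish. -/
noncomputable def Tmat (n : ℕ) (ε : ℝ) : Matrix (Fin (2 ^ n)) (Fin (2 ^ n)) ℝ :=
  fun i j =>
    if (i : ℕ) = 0 then
      if (j : ℕ) ≤ 1 then Real.exp ε / (Real.exp ε + Real.exp (-ε)) else 0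
    else if (i : ℕ) = 2 ^ n - 1 then
      if 2 ^ n - 2 ≤ (j : ℕ) then Real.exp (-ε) / (Real.exp ε + Real.exp (-ε)) else 0
    else if (j : ℕ) + 1 = (i : ℕ) then Real.exp (-ε) / (Real.exp ε + Real.exp (-ε))
    else if (j : ℕ) = (i : ℕ) + 1 then Real.exp ε / (Real.exp ε + Real.exp (-ε))
    else 0

/-- The two-sort permutation on `{0, …, M-1}`: it fixes `0` and `M-1` and swaps
`2k-1 ↔ 2k` for every `k = 1, …, M/2 - 1`. -/
def sigmaTS (M : ℕ) : Fin M → Fin M := fun j =>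
  if h : (j : ℕ) % 2 = 1 ∧ (j : ℕ) < M - 1 then
    ⟨(j : ℕ) + 1, by have := j.isLt; omega⟩
  else if h' : (j : ℕ) % 2 = 0 ∧ (j : ℕ) ≠ 0 then
    ⟨(j : ℕ) - 1, by have := j.isLt; omega⟩
  else j

lemma sum_two_support {N : ℕ} (f : Fin N → ℝ) (a b : Fin N) (hab : a ≠ b)
    (h0 : ∀ c, c ≠ a → c ≠ b → f c = 0) : ∑ c, f c = f a + f b := by
  rw [← Finset.sum_pair hab]
  refine (Finset.sum_subset (Finset.subset_univ _) ?_).symm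
  intro c _ hc
  simp only [Finset.mem_insert, Finset.mem_singleton, not_or] at hc
  exact h0 c hc.1 hc.2

set_option maxHeartbeats 1000000 in
/-- One full TSAC iteration on the diagonal `λ ∈ ℝ^{2N}` of the density matrix of
`n` computation qubits and one reset qubit — the reset step
`ζ_{2k} = (λ_{2k} + λ_{2k+1}) e^ε/z`, `ζ_{2k+1} = (λ_{2k} + λ_{2k+1}) e^{-ε}/z`,
followed by the two-sort step `λ'_j = ζ_{σ(j)}` — induces on the
computation-qubit diagonal `p_k = λ_{2k} + λ_{2k+1}` exactly the transition
matrix `T`: `p' = T p`. -/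
theorem tsac_iteration_is_T (n : ℕ) (hn : 1 ≤ n) (ε : ℝ) (hε : 0 < ε)
    (lam ζ lam' : Fin (2 * 2 ^ n) → ℝ) (p p' : Fin (2 ^ n) → ℝ)
    (hζ0 : ∀ k : Fin (2 ^ n), ζ ⟨2 * (k : ℕ), by have := k.isLt; omega⟩ =
      (lam ⟨2 * (k : ℕ), by have := k.isLt; omega⟩ +
        lam ⟨2 * (k : ℕ) + 1, by have := k.isLt; omega⟩) *
        Real.exp ε / (Real.exp ε + Real.exp (-ε)))
    (hζ1 : ∀ k : Fin (2 ^ n), ζ ⟨2 * (k : ℕ) + 1, by have := k.isLt; omega⟩ =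
      (lam ⟨2 * (k : ℕ), by have := k.isLt; omega⟩ +
        lam ⟨2 * (k : ℕ) + 1, by have := k.isLt; omega⟩) *
        Real.exp (-ε) / (Real.exp ε + Real.exp (-ε)))
    (hlam' : ∀ j, lam' j = ζ (sigmaTS (2 * 2 ^ n) j))
    (hp : ∀ k : Fin (2 ^ n), p k =
      lam ⟨2 * (k : ℕ), by have := k.isLt; omega⟩ +
        lam ⟨2 * (k : ℕ) + 1, by have := k.isLt; omega⟩)
    (hp' : ∀ k : Fin (2 ^ n), p' k =
      lam' ⟨2 * (k : ℕ), by have := k.isLt; omega⟩ +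
        lam' ⟨2 * (k : ℕ) + 1, by have := k.isLt; omega⟩) :
    p' = (Tmat n ε).mulVec p := by
  have hN : 2 ≤ 2 ^ n := by
    calc 2 = 2 ^ 1 := rfl
    _ ≤ 2 ^ n := Nat.pow_le_pow_right (by norm_num) hn
  set z := Real.exp ε + Real.exp (-ε) with hz
  -- ζ in terms of p
  have hz0 : ∀ k : Fin (2 ^ n), ζ ⟨2 * (k : ℕ), by have := k.isLt; omega⟩ =
      p k * Real.exp ε / z := by
    intro k; rw [hζ0 k, ← hp k]
  have hz1 : ∀ k : Fin (2 ^ n), ζ ⟨2 * (k : ℕ) + 1, by have := k.isLt; omega⟩ =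
      p k * Real.exp (-ε) / z := by
    intro k; rw [hζ1 k, ← hp k]
  funext k
  have hk := k.isLt
  rw [hp' k, hlam', hlam']
  rw [show (Tmat n ε).mulVec p k = ∑ j, Tmat n ε k j * p j from rfl]
  rcases Nat.eq_zero_or_pos (k : ℕ) with hk0 | hkpos
  · -- k = 0
    have hσ0 : sigmaTS (2 * 2 ^ n) ⟨2 * (k : ℕ), by omega⟩ = ⟨2 * (k : ℕ), by omega⟩ := by
      simp only [sigmaTS]
      rw [dif_neg (by omega), dif_neg (by omega)]
    have hσ1 : sigmaTS (2 * 2 ^ n) ⟨2 * (k : ℕ) + 1, by omega⟩ =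
        ⟨2 * (1 : ℕ), by omega⟩ := by
      simp only [sigmaTS]
      rw [dif_pos (by constructor <;> omega)]
      exact Fin.ext (by simp; exact Fin.ext (by simp [hk0]))
    simp only [hσ0, hσ1]
    have e0 : ζ ⟨2 * (k : ℕ), by omega⟩ = p k * Real.exp ε / z := hz0 k
    have e1 : ζ ⟨2 * (1 : ℕ), by omega⟩ = p ⟨1, by omega⟩ * Real.exp ε / z :=
      hz0 ⟨1, by omega⟩
    simp only [e0, e1]
    have hsum : ∑ j, Tmat n ε k j * p j =
        Tmat n ε k k * p k + Tmat n ε k ⟨1, by omega⟩ * p ⟨1, by omega⟩ := by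
      apply sum_two_support
      · intro h; apply_fun Fin.val at h; simp at h <;> omega
      · intro c hca hcb
        have hca' : (c : ℕ) ≠ (k : ℕ) := fun h => hca (Fin.ext h)
        have hcb' : (c : ℕ) ≠ 1 := fun h => hcb (Fin.ext h)
        simp only [Tmat]
        rw [if_pos hk0, if_neg (show ¬ (c : ℕ) ≤ 1 by omega), zero_mul]
    simp only [hsum]
    have T1 : Tmat n ε k k = Real.exp ε / z := by
      simp only [Tmat]; rw [if_pos hk0, if_pos (show (k : ℕ) ≤ 1 by omega)]
    have T2 : Tmat n ε k ⟨1, by omega⟩ = Real.exp ε / z := by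
      simp only [Tmat]; rw [if_pos hk0, if_pos (show ((⟨1, by omega⟩ : Fin (2 ^ n)) : ℕ) ≤ 1 by simp)]
    simp only [T1, T2]; ring
  rcases eq_or_ne (k : ℕ) (2 ^ n - 1) with hkN | hkmid
  · -- k = N - 1
    have hσ0 : sigmaTS (2 * 2 ^ n) ⟨2 * (k : ℕ), by omega⟩ =
        ⟨2 * ((k : ℕ) - 1) + 1, by omega⟩ := by
      simp only [sigmaTS]
      rw [dif_neg (by omega), dif_pos (by constructor <;> omega)]
      exact Fin.ext (by simp; try omega)
    have hσ1 : sigmaTS (2 * 2 ^ n) ⟨2 * (k : ℕ) + 1, by omega⟩ =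
        ⟨2 * (k : ℕ) + 1, by omega⟩ := by
      simp only [sigmaTS]
      rw [dif_neg (by omega)]
      rw [dif_neg (by omega)]
    simp only [hσ0, hσ1]
    have e0 : ζ ⟨2 * ((k : ℕ) - 1) + 1, by omega⟩ =
        p ⟨(k : ℕ) - 1, by omega⟩ * Real.exp (-ε) / z := hz1 ⟨(k : ℕ) - 1, by omega⟩
    have e1 : ζ ⟨2 * (k : ℕ) + 1, by omega⟩ = p k * Real.exp (-ε) / z := hz1 k
    simp only [e0, e1]
    have hsum : ∑ j, Tmat n ε k j * p j =
        Tmat n ε k ⟨(k : ℕ) - 1, by omega⟩ * p ⟨(k : ℕ) - 1, by omega⟩ +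
          Tmat n ε k k * p k := by
      apply sum_two_support
      · intro h; apply_fun Fin.val at h; simp at h <;> omega
      · intro c hca hcb
        have hca' : (c : ℕ) ≠ (k : ℕ) - 1 := fun h => hca (Fin.ext h)
        have hcb' : (c : ℕ) ≠ (k : ℕ) := fun h => hcb (Fin.ext h)
        have hc := c.isLt
        simp only [Tmat]
        rw [if_neg (show ¬ (k : ℕ) = 0 by omega), if_pos hkN,
          if_neg (show ¬ 2 ^ n - 2 ≤ (c : ℕ) by omega), zero_mul]
    simp only [hsum]
    have T1 : Tmat n ε k ⟨(k : ℕ) - 1, by omega⟩ = Real.exp (-ε) / z := by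
      simp only [Tmat]
      rw [if_neg (show ¬ (k : ℕ) = 0 by omega), if_pos hkN,
        if_pos (show 2 ^ n - 2 ≤ ((⟨(k : ℕ) - 1, by omega⟩ : Fin (2 ^ n)) : ℕ) by simp; try omega)]
    have T2 : Tmat n ε k k = Real.exp (-ε) / z := by
      simp only [Tmat]
      rw [if_neg (show ¬ (k : ℕ) = 0 by omega), if_pos hkN,
        if_pos (show 2 ^ n - 2 ≤ (k : ℕ) by omega)]
    simp only [T1, T2]; ring
  · -- middle
    have hσ0 : sigmaTS (2 * 2 ^ n) ⟨2 * (k : ℕ), by omega⟩ =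
        ⟨2 * ((k : ℕ) - 1) + 1, by omega⟩ := by
      simp only [sigmaTS]
      rw [dif_neg (by omega), dif_pos (by constructor <;> omega)]
      exact Fin.ext (by simp; try omega)
    have hσ1 : sigmaTS (2 * 2 ^ n) ⟨2 * (k : ℕ) + 1, by omega⟩ =
        ⟨2 * ((k : ℕ) + 1), by omega⟩ := by
      simp only [sigmaTS]
      rw [dif_pos (by constructor <;> omega)]
      exact Fin.ext (by simp; try omega)
    simp only [hσ0, hσ1]
    have e0 : ζ ⟨2 * ((k : ℕ) - 1) + 1, by omega⟩ =
        p ⟨(k : ℕ) - 1, by omega⟩ * Real.exp (-ε) / z := hz1 ⟨(k : ℕ) - 1, by omega⟩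
    have e1 : ζ ⟨2 * ((k : ℕ) + 1), by omega⟩ =
        p ⟨(k : ℕ) + 1, by omega⟩ * Real.exp ε / z := hz0 ⟨(k : ℕ) + 1, by omega⟩
    simp only [e0, e1]
    have hsum : ∑ j, Tmat n ε k j * p j =
        Tmat n ε k ⟨(k : ℕ) - 1, by omega⟩ * p ⟨(k : ℕ) - 1, by omega⟩ +
          Tmat n ε k ⟨(k : ℕ) + 1, by omega⟩ * p ⟨(k : ℕ) + 1, by omega⟩ := by
      apply sum_two_support
      · intro h; apply_fun Fin.val at h; simp at h <;> omega
      · intro c hca hcb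
        have hca' : (c : ℕ) ≠ (k : ℕ) - 1 := fun h => hca (Fin.ext h)
        have hcb' : (c : ℕ) ≠ (k : ℕ) + 1 := fun h => hcb (Fin.ext h)
        simp only [Tmat]
        rw [if_neg (show ¬ (k : ℕ) = 0 by omega), if_neg (show ¬ (k : ℕ) = 2 ^ n - 1 from hkmid),
          if_neg (show ¬ (c : ℕ) + 1 = (k : ℕ) by omega),
          if_neg (show ¬ (c : ℕ) = (k : ℕ) + 1 by omega), zero_mul]
    simp only [hsum]
    have T1 : Tmat n ε k ⟨(k : ℕ) - 1, by omega⟩ = Real.exp (-ε) / z := by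
      simp only [Tmat]
      rw [if_neg (show ¬ (k : ℕ) = 0 by omega), if_neg (show ¬ (k : ℕ) = 2 ^ n - 1 from hkmid),
        if_pos (show ((⟨(k : ℕ) - 1, by omega⟩ : Fin (2 ^ n)) : ℕ) + 1 = (k : ℕ) by simp; try omega)]
    have T2 : Tmat n ε k ⟨(k : ℕ) + 1, by omega⟩ = Real.exp ε / z := by
      simp only [Tmat]
      rw [if_neg (show ¬ (k : ℕ) = 0 by omega), if_neg (show ¬ (k : ℕ) = 2 ^ n - 1 from hkmid),
        if_neg (show ¬ ((⟨(k : ℕ) + 1, by omega⟩ : Fin (2 ^ n)) : ℕ) + 1 = (k : ℕ) by simp; try omega)]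
      simp [hz]
    simp only [T1, T2]; ring
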